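/- Let H be a finite group, A = Z(H) its center, a ∈ A, and let n, m be coprime positive integers with r, s ∈ ℤ such that rn + sm = 1. Form G = (H × ℤ)/⟨(sa, −n)⟩ and G' = (H × ℤ)/⟨(ra, −m)⟩. Then the pushout (amalgamated free product diagram) of the two maps H × ℤ → G (1 ↦ 1 on the ℤ factor) and H × ℤ → G' (1 ↦ −1 on the ℤ factor), i.e., the colimit of G ← H × ℤ → G', is naturally isomorphic to H/⟨⟨a⟩⟩, the quotient of H by the normal closure of a. -/
import Mathlib


/-- The quotient `(H × ℤ)/⟨(x, −k)⟩` of `H × ℤ` by the normal closure of `(x, −k)`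
(a central element when `x` is central in `H`). -/
abbrev GqGroup (H : Type*) [Group H] (x : H) (k : ℕ) : Type _ :=
  (H × Multiplicative ℤ) ⧸
    Subgroup.normalClosure {((x, Multiplicative.ofAdd (-(k : ℤ))) : H × Multiplicative ℤ)}

/-- The map `H × ℤ → (H × ℤ)/⟨(x, −k)⟩` which is the identity on `H` and `1 ↦ 1` on `ℤ`. -/
def toGq (H : Type*) [Group H] (x : H) (k : ℕ) :
    (H × Multiplicative ℤ) →* GqGroup H x k :=
  QuotientGroup.mk'
    (Subgroup.normalClosure
      {((x, Multiplicative.ofAdd (-(k : ℤ))) : H × Multiplicative ℤ)})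

/-- The map `H × ℤ → (H × ℤ)/⟨(x, −k)⟩` which is the identity on `H` and `1 ↦ −1` on `ℤ`. -/
def toGqNeg (H : Type*) [Group H] (x : H) (k : ℕ) :
    (H × Multiplicative ℤ) →* GqGroup H x k :=
  (toGq H x k).comp ((MonoidHom.id H).prodMap (invMonoidHom : Multiplicative ℤ →* Multiplicative ℤ))

/-- The two-element family of groups `G = (H × ℤ)/⟨(x, −n)⟩` and `G' = (H × ℤ)/⟨(y, −m)⟩`. -/
def pushoutFam (H : Type*) [Group H] (x y : H) (n m : ℕ) : Bool → Type _ :=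
  fun b => match b with
  | true => GqGroup H x n
  | false => GqGroup H y m

instance (H : Type*) [Group H] (x y : H) (n m : ℕ) :
    ∀ b, Group (pushoutFam H x y n m b) := fun b => by
  cases b <;> (dsimp [pushoutFam]; infer_instance)

/-- The two structure maps `H × ℤ → G`, `H × ℤ → G'` (the second inverting `ℤ`). -/
def pushoutMaps (H : Type*) [Group H] (x y : H) (n m : ℕ) :
    ∀ b, (H × Multiplicative ℤ) →* pushoutFam H x y n m b := fun b => match b with
  | true => toGq H x n
  | false => toGqNeg H y m

/-- Let `H` be a finite group, `a` a central element, `n, m` coprime positive integers and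
`r, s ∈ ℤ` with `rn + sm = 1`. Form `G = (H × ℤ)/⟨(aˢ, −n)⟩` and `G' = (H × ℤ)/⟨(aʳ, −m)⟩`.
Then the pushout (in the category of groups) of `G ← H × ℤ → G'`, where the first map is
the identity on `H` and `+1` on `ℤ` and the second is the identity on `H` and `−1` on `ℤ`,
is naturally isomorphic to `H/⟨⟨a⟩⟩`, the quotient of `H` by the normal closure of `a`. -/
theorem pushout_iso_quotient
    (H : Type*) [Group H] [Finite H] (a : H) (ha : a ∈ Subgroup.center H)
    (n m : ℕ) (hn : 0 < n) (hm : 0 < m) (hcop : Nat.gcd m n = 1)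
    (r s : ℤ) (hrs : r * (n : ℤ) + s * (m : ℤ) = 1) :
    Nonempty
      (Monoid.PushoutI (pushoutMaps H (a ^ s) (a ^ r) n m) ≃*
        (H ⧸ Subgroup.normalClosure {a})) := by
  
  classical
  set N := Subgroup.normalClosure ({a} : Set H) with hN
  set φ := pushoutMaps H (a ^ s) (a ^ r) n m with hφ
  let p : (H × Multiplicative ℤ) →* H ⧸ N :=
    (QuotientGroup.mk' N).comp (MonoidHom.fst H (Multiplicative ℤ))
  have haN : a ∈ N := Subgroup.subset_normalClosure rfl
  have hp : ∀ (x : H) (t : Multiplicative ℤ), x ∈ N → ((x, t) : H × Multiplicative ℤ) ∈ p.ker := by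
    intro x t hx
    simp only [p, MonoidHom.mem_ker, MonoidHom.comp_apply, MonoidHom.coe_fst,
      QuotientGroup.mk'_apply]
    exact (QuotientGroup.eq_one_iff x).2 hx
  have hker1 : Subgroup.normalClosure {((a ^ s, Multiplicative.ofAdd (-(n : ℤ))) :
      H × Multiplicative ℤ)} ≤ p.ker := by
    apply Subgroup.normalClosure_le_normal
    intro x hx
    rw [Set.mem_singleton_iff] at hx
    subst hx
    exact hp _ _ (Subgroup.zpow_mem _ haN s)
  have hker2 : Subgroup.normalClosure {((a ^ r, Multiplicative.ofAdd (-(m : ℤ))) :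
      H × Multiplicative ℤ)} ≤ p.ker := by
    apply Subgroup.normalClosure_le_normal
    intro x hx
    rw [Set.mem_singleton_iff] at hx
    subst hx
    exact hp _ _ (Subgroup.zpow_mem _ haN r)
  let fam : ∀ b, pushoutFam H (a ^ s) (a ^ r) n m b →* H ⧸ N := fun b => match b with
    | true => QuotientGroup.lift _ p hker1
    | false => QuotientGroup.lift _ p hker2
  have hfam : ∀ b, (fam b).comp (φ b) = p := by
    intro b
    cases b <;> (ext ⟨x, t⟩ <;> rfl)
  let F : Monoid.PushoutI φ →* H ⧸ N := Monoid.PushoutI.lift fam p hfam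
  -- the map from `H` to the pushout
  let j : H →* Monoid.PushoutI φ :=
    (Monoid.PushoutI.base φ).comp (MonoidHom.inl H (Multiplicative ℤ))
  let V : Multiplicative ℤ →* Monoid.PushoutI φ :=
    (Monoid.PushoutI.base φ).comp (MonoidHom.inr H (Multiplicative ℤ))
  set U := V (Multiplicative.ofAdd (1 : ℤ)) with hU
  have hVt : ∀ t : ℤ, V (Multiplicative.ofAdd t) = U ^ t := by
    intro t
    rw [hU, ← map_zpow]
    congr 1
    simp [← ofAdd_zsmul]
  have hbase : ∀ (x : H) (t : ℤ),
      Monoid.PushoutI.base φ ((x, Multiplicative.ofAdd t) : H × Multiplicative ℤ)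
        = j x * U ^ t := by
    intro x t
    have : ((x, Multiplicative.ofAdd t) : H × Multiplicative ℤ)
        = (x, 1) * (1, Multiplicative.ofAdd t) := by
      simp [Prod.mk_mul_mk]
    rw [this, map_mul, ← hVt t]
    rfl
  -- relation from the `true` vertex: `j (a ^ s) = U ^ n`
  have hrel1 : j (a ^ s) * U ^ (-(n : ℤ)) = 1 := by
    rw [← hbase]
    rw [← Monoid.PushoutI.of_apply_eq_base φ true]
    have : φ true ((a ^ s, Multiplicative.ofAdd (-(n : ℤ))) : H × Multiplicative ℤ) = 1 := by
      show toGq H (a ^ s) n _ = 1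
      rw [toGq, QuotientGroup.mk'_apply, QuotientGroup.eq_one_iff]
      exact Subgroup.subset_normalClosure rfl
    rw [this, map_one]
  -- relation from the `false` vertex: `j (a ^ r) = U ^ (-m)`
  have hrel2 : j (a ^ r) * U ^ (m : ℤ) = 1 := by
    have h1 : φ false ((a ^ r, Multiplicative.ofAdd ((m : ℤ))) : H × Multiplicative ℤ) = 1 := by
      show toGq H (a ^ r) m ((a ^ r, (Multiplicative.ofAdd ((m : ℤ)))⁻¹) :
        H × Multiplicative ℤ) = 1
      have : (Multiplicative.ofAdd ((m : ℤ)))⁻¹ = Multiplicative.ofAdd (-(m : ℤ)) := rfl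
      rw [this, toGq, QuotientGroup.mk'_apply, QuotientGroup.eq_one_iff]
      exact Subgroup.subset_normalClosure rfl
    have h2 := Monoid.PushoutI.of_apply_eq_base φ false
      ((a ^ r, Multiplicative.ofAdd ((m : ℤ))) : H × Multiplicative ℤ)
    rw [h1, map_one, hbase] at h2
    exact h2.symm
  have hUn : U ^ (n : ℤ) = j (a ^ s) := by
    have := hrel1
    rw [zpow_neg, mul_inv_eq_one] at this
    exact this.symm
  have hUm : U ^ (m : ℤ) = (j (a ^ r))⁻¹ := (inv_eq_of_mul_eq_one_right hrel2).symm
  have keyU : (U ^ (n : ℤ)) ^ r * (U ^ (m : ℤ)) ^ s = U := by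
    rw [← zpow_mul, ← zpow_mul, ← zpow_add, mul_comm (n : ℤ) r, mul_comm (m : ℤ) s, hrs, zpow_one]
  have hU1 : U = 1 := by
    rw [← keyU, hUn, hUm, inv_zpow, ← map_zpow, ← map_zpow, ← map_inv, ← map_mul]
    have h0 : (a ^ s) ^ r * ((a ^ r) ^ s)⁻¹ = 1 := by group
    rw [h0, map_one]
  have hjs : j (a ^ s) = 1 := by rw [← hUn, hU1, one_zpow]
  have hjr : j (a ^ r) = 1 := by
    have h0 := hUm
    rw [hU1, one_zpow, eq_comm, inv_eq_one] at h0
    exact h0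
  have keya : (a ^ r) ^ (n : ℤ) * (a ^ s) ^ (m : ℤ) = a := by
    rw [← zpow_mul, ← zpow_mul, ← zpow_add, hrs, zpow_one]
  have hja : j a = 1 := by
    have h0 := congrArg j keya
    rw [map_mul, map_zpow j (a ^ r) (n : ℤ), map_zpow j (a ^ s) (m : ℤ), hjr, hjs,
      one_zpow, one_zpow, one_mul] at h0
    exact h0.symm
  have hjker : N ≤ j.ker := by
    apply Subgroup.normalClosure_le_normal
    intro x hx
    rw [Set.mem_singleton_iff] at hx
    subst hx
    exact hja
  let Gmap : (H ⧸ N) →* Monoid.PushoutI φ := QuotientGroup.lift N j hjker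
  refine ⟨MonoidHom.toMulEquiv F Gmap ?_ ?_⟩
  · -- Gmap ∘ F = id on the pushout
    apply Monoid.PushoutI.hom_ext_nonempty
    intro b
    cases b
    · ext g
      simp only [MonoidHom.comp_apply, MonoidHom.id_apply]
      refine QuotientGroup.induction_on g ?_
      rintro ⟨x, t⟩
      obtain ⟨t, rfl⟩ : ∃ t' : ℤ, Multiplicative.ofAdd t' = t := ⟨t, rfl⟩
      have e1 : ((x, (Multiplicative.ofAdd (-t))⁻¹) : H × Multiplicative ℤ)
          = (x, Multiplicative.ofAdd t) := by simp
      have hmk : φ false ((x, Multiplicative.ofAdd (-t)) : H × Multiplicative ℤ)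
          = (QuotientGroup.mk ((x, Multiplicative.ofAdd t) : H × Multiplicative ℤ) :
            pushoutFam H (a ^ s) (a ^ r) n m false) := by
        show (QuotientGroup.mk ((x, (Multiplicative.ofAdd (-t))⁻¹) : H × Multiplicative ℤ) :
            pushoutFam H (a ^ s) (a ^ r) n m false) = _
        rw [e1]
      rw [← hmk]
      calc Gmap (F (Monoid.PushoutI.of false
              (φ false ((x, Multiplicative.ofAdd (-t)) : H × Multiplicative ℤ))))
          = Gmap (fam false (φ false ((x, Multiplicative.ofAdd (-t)) : H × Multiplicative ℤ))) :=
            congrArg Gmap (Monoid.PushoutI.lift_of fam p hfam _)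
        _ = Gmap (p ((x, Multiplicative.ofAdd (-t)) : H × Multiplicative ℤ)) :=
            congrArg Gmap (DFunLike.congr_fun (hfam false) _)
        _ = j x := rfl
        _ = Monoid.PushoutI.of false
              (φ false ((x, Multiplicative.ofAdd (-t)) : H × Multiplicative ℤ)) := by
            rw [Monoid.PushoutI.of_apply_eq_base φ false, hbase, hU1, one_zpow, mul_one]
    · ext g
      simp only [MonoidHom.comp_apply, MonoidHom.id_apply]
      refine QuotientGroup.induction_on g ?_
      rintro ⟨x, t⟩
      obtain ⟨t, rfl⟩ : ∃ t' : ℤ, Multiplicative.ofAdd t' = t := ⟨t, rfl⟩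
      have hmk : φ true ((x, Multiplicative.ofAdd t) : H × Multiplicative ℤ)
          = (QuotientGroup.mk ((x, Multiplicative.ofAdd t) : H × Multiplicative ℤ) :
            pushoutFam H (a ^ s) (a ^ r) n m true) := rfl
      rw [← hmk]
      calc Gmap (F (Monoid.PushoutI.of true
              (φ true ((x, Multiplicative.ofAdd t) : H × Multiplicative ℤ))))
          = Gmap (fam true (φ true ((x, Multiplicative.ofAdd t) : H × Multiplicative ℤ))) :=
            congrArg Gmap (Monoid.PushoutI.lift_of fam p hfam _)
        _ = Gmap (p ((x, Multiplicative.ofAdd t) : H × Multiplicative ℤ)) :=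
            congrArg Gmap (DFunLike.congr_fun (hfam true) _)
        _ = j x := rfl
        _ = Monoid.PushoutI.of true
              (φ true ((x, Multiplicative.ofAdd t) : H × Multiplicative ℤ)) := by
            rw [Monoid.PushoutI.of_apply_eq_base φ true, hbase, hU1, one_zpow, mul_one]
  · -- F ∘ Gmap = id on H ⧸ N
    ext h
    simp only [MonoidHom.comp_apply, MonoidHom.id_apply, QuotientGroup.mk'_apply,
      QuotientGroup.coe_mk']
    calc F (Gmap (QuotientGroup.mk h))
        = F (Monoid.PushoutI.of true (φ true ((h, 1) : H × Multiplicative ℤ))) :=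
          (congrArg F (Monoid.PushoutI.of_apply_eq_base φ true
            ((h, 1) : H × Multiplicative ℤ))).symm
      _ = fam true (φ true ((h, 1) : H × Multiplicative ℤ)) :=
          Monoid.PushoutI.lift_of fam p hfam _
      _ = p ((h, 1) : H × Multiplicative ℤ) := DFunLike.congr_fun (hfam true) _
      _ = QuotientGroup.mk h := rfl
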